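/- Let p be a probability distribution on {1,...,n} (n divisible by 3) satisfying p_{3i-2} > p_{3i} > (4/5)·p_{3i-2} and p_{3i-1} > (3/4)·p_{3i} for all 1 ≤ i ≤ n/3, and let q be any log-concave distribution on {1,...,n}. Then d_TV(p, q) ≥ (1/2)·∑_{i=1}^{n/3} max(0, √(p_{3i-2}·p_{3i}) - p_{3i-1}). -/
import Mathlib


open Finset

private lemma sqrt_diff_le_aux (x y x' y' : ℝ) (hx'0 : 0 ≤ x') (hy'0 : 0 ≤ y')
    (hx' : x' ≤ x) (hy' : y' ≤ y)
    (hxy : x ≤ (5/4) * y) (hyx : y ≤ x) (hy'y : (3/5) * y ≤ y') :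
    Real.sqrt (x * y) ≤ Real.sqrt (x' * y') + (x - x') + (y - y') := by
  have hx0 : 0 ≤ x := le_trans hx'0 hx'
  have hy0 : 0 ≤ y := le_trans hy'0 hy'
  rw [Real.sqrt_mul hx0, Real.sqrt_mul hx'0]
  set a := Real.sqrt x with ha
  set b := Real.sqrt y with hb
  set a' := Real.sqrt x' with ha'
  set b' := Real.sqrt y' with hb'
  have ha0 : 0 ≤ a := Real.sqrt_nonneg x
  have hb0 : 0 ≤ b := Real.sqrt_nonneg y
  have ha'0 : 0 ≤ a' := Real.sqrt_nonneg x'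
  have hb'0 : 0 ≤ b' := Real.sqrt_nonneg y'
  have hxa : a ^ 2 = x := Real.sq_sqrt hx0
  have hyb : b ^ 2 = y := Real.sq_sqrt hy0
  have hxa' : a' ^ 2 = x' := Real.sq_sqrt hx'0
  have hyb' : b' ^ 2 = y' := Real.sq_sqrt hy'0
  have haa' : a' ≤ a := Real.sqrt_le_sqrt hx'
  have hbb' : b' ≤ b := Real.sqrt_le_sqrt hy'
  have hba : b ≤ a := Real.sqrt_le_sqrt hyx
  -- a ≤ b + b' since a² ≤ (5/4) b² and b'² ≥ (3/5) b²
  have h2 : a ≤ b + b' := by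
    nlinarith [mul_nonneg hb0 hb'0, sq_nonneg (b + b' - a), sq_nonneg (b + b' + a)]
  have h3 : b' ≤ a + a' := by linarith
  have key1 : 0 ≤ (a - a') * (a + a' - b') := by
    apply mul_nonneg (by linarith) (by linarith)
  have key2 : 0 ≤ (b - b') * (b + b' - a) := by
    apply mul_nonneg (by linarith) (by linarith)
  nlinarith [key1, key2]

private lemma triple_key (x y z u v w : ℝ) (hu0 : 0 ≤ u) (hv0 : 0 ≤ v) (hw0 : 0 ≤ w)
    (hyx : y < x) (hxy : (4/5) * x < y) (hz : (3/4) * y < z)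
    (hlc : u * v ≤ w ^ 2) :
    max 0 (Real.sqrt (x * y) - z) ≤ |x - u| + |z - w| + |y - v| := by
  have hx0 : (0:ℝ) < x := by linarith
  have hy0 : (0:ℝ) < y := by linarith
  have hz0 : (0:ℝ) < z := by linarith
  have hs : x - u ≤ |x - u| := le_abs_self _
  have ht : y - v ≤ |y - v| := le_abs_self _
  have hs0 : (0:ℝ) ≤ |x - u| := abs_nonneg _
  have ht0 : (0:ℝ) ≤ |y - v| := abs_nonneg _
  have hr0 : (0:ℝ) ≤ |z - w| := abs_nonneg _
  have hr : w - z ≤ |z - w| := by rw [abs_sub_comm]; exact le_abs_self _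
  apply max_le (by linarith)
  rcases le_or_gt ((2/5) * x) |x - u| with hcs | hcs
  · -- √(xy) ≤ x and z > (3/5) x
    have h1 : Real.sqrt (x * y) ≤ x := by
      calc Real.sqrt (x * y) ≤ Real.sqrt (x * x) :=
            Real.sqrt_le_sqrt (by nlinarith)
        _ = x := Real.sqrt_mul_self hx0.le
    have hz' : (3/5) * x < z := by linarith
    linarith
  rcases le_or_gt ((2/5) * y) |y - v| with hct | hct
  · -- √(xy) ≤ (23/20) y and z > (3/4) y
    have h1 : Real.sqrt (x * y) ≤ (23/20) * y := by
      calc Real.sqrt (x * y) ≤ Real.sqrt (((23/20) * y) * ((23/20) * y)) :=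
            Real.sqrt_le_sqrt (by nlinarith)
        _ = (23/20) * y := Real.sqrt_mul_self (by linarith)
    linarith
  · -- main case: set x' = x - |x-u|, y' = y - |y-v|
    set s := |x - u| with hsdef
    set t := |y - v| with htdef
    have hu' : x - s ≤ u := by
      have : x - u ≤ s := hs
      linarith
    have hv' : y - t ≤ v := by linarith
    have hx'0 : (0:ℝ) ≤ x - s := by linarith
    have hy'0 : (0:ℝ) ≤ y - t := by linarith
    have hsq : Real.sqrt ((x - s) * (y - t)) ≤ w := by
      calc Real.sqrt ((x - s) * (y - t)) ≤ Real.sqrt (u * v) :=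
            Real.sqrt_le_sqrt (mul_le_mul hu' hv' hy'0 hu0)
        _ ≤ Real.sqrt (w ^ 2) := Real.sqrt_le_sqrt hlc
        _ = w := Real.sqrt_sq hw0
    have hmain : Real.sqrt (x * y) ≤ Real.sqrt ((x - s) * (y - t)) + (x - (x - s)) + (y - (y - t)) := by
      apply sqrt_diff_le_aux <;> linarith
    have : Real.sqrt (x * y) ≤ w + s + t := by
      have : (x - (x - s)) = s := by ring
      nlinarith [hmain, hsq]
    linarith

private lemma sum_triples (f : ℕ → ℝ) (m : ℕ) :
    ∑ i ∈ Icc 1 m, (f (3*i-2) + f (3*i-1) + f (3*i)) = ∑ j ∈ Icc 1 (3*m), f j := by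
  induction m with
  | zero => simp
  | succ k ih =>
    rw [Finset.sum_Icc_succ_top (by omega : 1 ≤ k+1), ih]
    have e1 : 3*(k+1)-2 = 3*k+1 := by omega
    have e2 : 3*(k+1)-1 = 3*k+1+1 := by omega
    have e3 : 3*(k+1) = 3*k+1+1+1 := by omega
    rw [e1, e2, e3, Finset.sum_Icc_succ_top (by omega), Finset.sum_Icc_succ_top (by omega),
      Finset.sum_Icc_succ_top (by omega)]
    ring

theorem log_concave_distance_lower_bound (n : ℕ) (hn : 3 ∣ n) (hn0 : 0 < n)
    (p q : ℕ → ℝ)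
    (hp0 : ∀ i ∈ Finset.Icc 1 n, 0 ≤ p i) (hp1 : ∑ i ∈ Finset.Icc 1 n, p i = 1)
    (hpa : ∀ i ∈ Finset.Icc 1 (n / 3), p (3 * i) < p (3 * i - 2))
    (hpb : ∀ i ∈ Finset.Icc 1 (n / 3), (4 / 5) * p (3 * i - 2) < p (3 * i))
    (hpc : ∀ i ∈ Finset.Icc 1 (n / 3), (3 / 4) * p (3 * i) < p (3 * i - 1))
    (hq0 : ∀ i ∈ Finset.Icc 1 n, 0 ≤ q i) (hq1 : ∑ i ∈ Finset.Icc 1 n, q i = 1)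
    -- the support of q is a contiguous interval
    (hqsupp : ∃ a b : ℕ, ∀ i ∈ Finset.Icc 1 n, (0 < q i ↔ a ≤ i ∧ i ≤ b))
    -- log-concavity of q
    (hqlc : ∀ i : ℕ, 2 ≤ i → i ≤ n - 1 → q (i - 1) * q (i + 1) ≤ (q i) ^ 2) :
    (1 / 2) * ∑ i ∈ Finset.Icc 1 (n / 3),
        max 0 (Real.sqrt (p (3 * i - 2) * p (3 * i)) - p (3 * i - 1)) ≤
      (1 / 2) * ∑ i ∈ Finset.Icc 1 n, |p i - q i| := by
  have hm : 3 * (n / 3) = n := Nat.mul_div_cancel' hn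
  have key2 : ∀ i ∈ Finset.Icc 1 (n / 3),
      max 0 (Real.sqrt (p (3 * i - 2) * p (3 * i)) - p (3 * i - 1)) ≤
        |p (3*i-2) - q (3*i-2)| + |p (3*i-1) - q (3*i-1)| + |p (3*i) - q (3*i)| := by
    intro i hi
    have hi' := Finset.mem_Icc.mp hi
    have hin : 3 * i ≤ n := by omega
    have h1 : (3*i-2) ∈ Finset.Icc 1 n := Finset.mem_Icc.mpr (by omega)
    have h2 : (3*i-1) ∈ Finset.Icc 1 n := Finset.mem_Icc.mpr (by omega)
    have h3 : (3*i) ∈ Finset.Icc 1 n := Finset.mem_Icc.mpr (by omega)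
    have hlc := hqlc (3*i-1) (by omega) (by omega)
    rw [show 3*i-1-1 = 3*i-2 from by omega, show 3*i-1+1 = 3*i from by omega] at hlc
    exact triple_key (p (3*i-2)) (p (3*i)) (p (3*i-1)) (q (3*i-2)) (q (3*i)) (q (3*i-1))
      (hq0 _ h1) (hq0 _ h3) (hq0 _ h2) (hpa i hi) (hpb i hi) (hpc i hi) hlc
  have hsum : ∑ i ∈ Finset.Icc 1 (n / 3),
      max 0 (Real.sqrt (p (3 * i - 2) * p (3 * i)) - p (3 * i - 1)) ≤
      ∑ i ∈ Finset.Icc 1 n, |p i - q i| := by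
    calc ∑ i ∈ Finset.Icc 1 (n / 3),
        max 0 (Real.sqrt (p (3 * i - 2) * p (3 * i)) - p (3 * i - 1))
        ≤ ∑ i ∈ Finset.Icc 1 (n / 3),
            (|p (3*i-2) - q (3*i-2)| + |p (3*i-1) - q (3*i-1)| + |p (3*i) - q (3*i)|) :=
          Finset.sum_le_sum key2
      _ = ∑ j ∈ Finset.Icc 1 (3 * (n / 3)), |p j - q j| := sum_triples (fun j => |p j - q j|) (n / 3)
      _ = ∑ i ∈ Finset.Icc 1 n, |p i - q i| := by rw [hm]
  linarith
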